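/- For all real numbers x ≥ 0, y ≥ 0, z ≥ 0 and every integer m ≥ 1, setting c = (x+y+z)/((1+x)(1+y)(1+z)) and d = 1 − 1/((1+x)(1+y)(1+z)), the series ∑_{p=m}^{∞} C(p−1, m−1) d^{p−m} converges and (x+y+z)^m = c^m · ∑_{p=m}^{∞} C(p−1, m−1) d^{p−m}, where C(n,k) denotes the binomial coefficient. -/

import Mathlib

/-- 3D ADI symbol identity: with `c = (x+y+z)/((1+x)(1+y)(1+z))` and
`d = 1 − 1/((1+x)(1+y)(1+z))`, the series `∑_{p=m}^{∞} C(p−1,m−1) d^{p−m}` converges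
(indexing `p = m + j`) and `(x+y+z)^m = c^m · ∑_{p=m}^{∞} C(p−1,m−1) d^{p−m}`. -/
theorem stmt_13 (x y z : ℝ) (hx : 0 ≤ x) (hy : 0 ≤ y) (hz : 0 ≤ z) (m : ℕ) (hm : 1 ≤ m) :
    ∃ s : ℝ,
      HasSum (fun j : ℕ =>
        ((m - 1 + j).choose (m - 1) : ℝ) * (1 - 1 / ((1 + x) * (1 + y) * (1 + z))) ^ j) s ∧
      (x + y + z) ^ m = ((x + y + z) / ((1 + x) * (1 + y) * (1 + z))) ^ m * s := by
  set P : ℝ := (1 + x) * (1 + y) * (1 + z) with hP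
  have hP1 : 1 ≤ P := by nlinarith [mul_nonneg hx hy, mul_nonneg (mul_nonneg hx hy) hz]
  have hP0 : 0 < P := lt_of_lt_of_le one_pos hP1
  set d : ℝ := 1 - 1 / P with hd
  have hd0 : 0 ≤ d := by
    rw [hd, sub_nonneg, div_le_one hP0]; exact hP1
  have hd1 : d < 1 := by
    have : 0 < 1 / P := by positivity
    rw [hd]; linarith
  have hnorm : ‖d‖ < 1 := by rw [Real.norm_eq_abs, abs_of_nonneg hd0]; exact hd1
  have h := hasSum_choose_mul_geometric_of_norm_lt_one (𝕜 := ℝ) (m - 1) hnorm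
  have h1d : 1 - d = 1 / P := by simp [hd]
  refine ⟨1 / (1 - d) ^ (m - 1 + 1), ?_, ?_⟩
  · convert h using 2 with j
    · rfl
    rw [Nat.add_comm]
  · have hm1 : m - 1 + 1 = m := Nat.succ_pred_eq_of_pos hm
    rw [hm1, h1d, one_div, one_div, inv_pow, inv_inv, div_pow]
    rw [div_mul_eq_mul_div, mul_div_assoc, div_self (by positivity : (P:ℝ)^m ≠ 0), mul_one]
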